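/- The unit i : Id → R of the monad of cubical reflexive sets with connections is a cartesian natural transformation: for every cubical set C, the square with top C → 1, left i(C) : C → R(C), bottom R(!) : R(C) → R(1), right i(1) : 1 → R(1) is a pullback in the category of cubical sets. -/

import Mathlib

/-- A cubical set (presheaf on the pre-cubical site, presented by its cells and
face maps subject to the cubical identities). -/
structure PreCubicalSet where
  cell : ℕ → Type
  face : ∀ {n : ℕ}, Bool → Fin (n + 1) → cell (n + 1) → cell n
  face_face : ∀ {n : ℕ} (α β : Bool) (i k : Fin (n + 1)), i ≤ k →
    ∀ x : cell (n + 2),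
      face α i (face β k.succ x) = face β k (face α i.castSucc x)

/-- A formal string or zigzag of degeneracy (`ε_j`) and connection (`Γ^γ_j`)
operations raising dimension `p` to dimension `n`.  It is empty iff `p = n`. -/
inductive DegString : ℕ → ℕ → Type
  | nil {p : ℕ} : DegString p p
  | degen {p q : ℕ} (j : Fin (q + 1)) (z : DegString p q) : DegString p (q + 1)
  | conn {p q : ℕ} (γ : Bool) (j : Fin (q + 1)) (z : DegString p (q + 1)) :
      DegString p (q + 2)

/-- An `n`-cell of `R(C)`: a pair of a string/zigzag of degeneracies `z` of size
`n - p` together with a `p`-cell of `C` (the string is empty iff `p = n`). -/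
def RCell (cell : ℕ → Type) (n : ℕ) : Type := (p : ℕ) × DegString p n × cell p

/-- The unit `i : C → R(C)` of the monad of reflexive cubical sets with
connections: a cell is sent to itself, with empty degeneracy string. -/
def runit (cell : ℕ → Type) (n : ℕ) (c : cell n) : RCell cell n := ⟨n, .nil, c⟩

/-- The action of the endofunctor `R` on (levelwise) maps of cells. -/
def rmap {C D : ℕ → Type} (f : ∀ p, C p → D p) (n : ℕ) :
    RCell C n → RCell D n :=
  fun x => ⟨x.1, x.2.1, f x.1 x.2.2⟩

/-- The terminal cubical set has a unique cell `1(n)` in each dimension. -/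
def OneCell : ℕ → Type := fun _ => PUnit

/-- The unit `i : Id → R` of the monad of cubical reflexive sets with connections is
a cartesian natural transformation: for every cubical set `C` the square with top
`C → 1`, left `i(C) : C → R(C)`, right `i(1) : 1 → R(1)` and bottom
`R(!) : R(C) → R(1)` is a pullback (of cubical sets, i.e. a levelwise pullback in
every dimension `n`). -/
theorem runit_cartesian (C : PreCubicalSet) (n : ℕ) :
    @CategoryTheory.IsPullback Type _ (C.cell n) PUnit (RCell C.cell n)
      (RCell OneCell n)
      (TypeCat.ofHom (fun _ => PUnit.unit))
      (TypeCat.ofHom (runit C.cell n))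
      (TypeCat.ofHom (runit OneCell n))
      (TypeCat.ofHom (rmap (fun _ _ => PUnit.unit) n)) := by
  have key : ∀ x : RCell C.cell n,
      rmap (fun _ _ => PUnit.unit) n x = runit OneCell n PUnit.unit →
      ∃ c : C.cell n, x = runit C.cell n c := by
    rintro ⟨p, z, c⟩ h
    simp only [rmap, runit] at h
    injection h with h1 h2
    subst h1
    have h3 : (z, PUnit.unit) = (DegString.nil (p := p), PUnit.unit) :=
      eq_of_heq h2
    obtain rfl : z = DegString.nil := congrArg Prod.fst h3
    exact ⟨c, rfl⟩
  have injL : Function.Injective (runit C.cell n) := by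
    intro a b h
    simp only [runit] at h
    injection h with h1 h2
    exact congrArg Prod.snd h2
  have w : @CategoryTheory.CommSq Type _ (C.cell n) PUnit (RCell C.cell n)
      (RCell OneCell n) (TypeCat.ofHom (fun _ => PUnit.unit)) (TypeCat.ofHom (runit C.cell n))
      (TypeCat.ofHom (runit OneCell n)) (TypeCat.ofHom (rmap (fun _ _ => PUnit.unit) n)) := ⟨by ext x; rfl⟩
  apply CategoryTheory.IsPullback.of_isLimit' w
  refine CategoryTheory.Limits.PullbackCone.IsLimit.mk w.w
    (fun s => TypeCat.ofHom fun x => (key (s.snd x) (CategoryTheory.types_congr_hom s.condition x).symm).choose) ?_ ?_ ?_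
  · intro s
    rfl
  · intro s
    ext x
    exact (key (s.snd x) (CategoryTheory.types_congr_hom s.condition x).symm).choose_spec.symm
  · intro s m _ hm
    ext x
    apply injL
    have h1 : runit C.cell n (m x) = s.snd x := CategoryTheory.types_congr_hom hm x
    have h2 := (key (s.snd x) (CategoryTheory.types_congr_hom s.condition x).symm).choose_spec
    exact h1.trans h2
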